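/- Let α be a linearly ordered type with a greatest element ⊤, let g be a permutation of α with g(⊤) = ⊤, let s be a finite set over α, and let m be a natural number. Then sort(image g s) ++ replicate(m, ⊤) ≤lex map g (sort s ++ replicate(m, ⊤)), where sort t denotes the strictly increasing sorted list of the elements of the finite set t, replicate(m, ⊤) is the list consisting of m copies of ⊤, ++ is list concatenation, image g s is the image of s under g, and map g applies g to every element of a list. -/

import Mathlib

private theorem lex_append_of_lex {α : Type*} {r : α → α → Prop} :
    ∀ {l l' : List α}, l.length = l'.length → List.Lex r l l' →
      ∀ t : List α, List.Lex r (l ++ t) (l' ++ t) := by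
  intro l l' hlen h
  induction h with
  | nil => simp at hlen
  | cons h ih =>
      intro t
      exact List.Lex.cons (ih (by simpa using hlen) t)
  | rel h =>
      intro t
      exact List.Lex.rel h

private theorem sorted_lex_perm {α : Type*} [LinearOrder α] :
    ∀ {l l' : List α}, l.Perm l' → l.Pairwise (· ≤ ·) →
      l = l' ∨ List.Lex (· < ·) l l' := by
  intro l
  induction l with
  | nil => intro l' hp _; left; exact (List.Perm.nil_eq hp)
  | cons a l ih =>
      intro l' hp hs
      match l' with
      | [] => exact absurd hp.symm (by simp)
      | b :: t' =>
        rcases eq_or_ne a b with rfl | hne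
        · rcases ih (hp.cons_inv) hs.of_cons with h | h
          · left; rw [h]
          · right; exact List.Lex.cons h
        · have hb : b ∈ a :: l := hp.mem_iff.mpr (List.mem_cons_self)
          have hab : a ≤ b := by
            rcases List.mem_cons.mp hb with rfl | hb
            · exact le_refl _
            · exact (List.pairwise_cons.mp hs).1 b hb
          right
          exact List.Lex.rel (lt_of_le_of_ne hab hne)

/-- ExplicitVariableSizeDummy representation of sets: padding with a top dummy
value fixed by the symmetry. -/
theorem explicit_dummy_rep_lex {α : Type*} [LinearOrder α] [OrderTop α]
    (g : Equiv.Perm α) (hg : g ⊤ = ⊤) (s : Finset α) (m : ℕ) :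
    (s.image g).sort (· ≤ ·) ++ List.replicate m (⊤ : α) =
        (s.sort (· ≤ ·) ++ List.replicate m (⊤ : α)).map g ∨
      List.Lex (· < ·) ((s.image g).sort (· ≤ ·) ++ List.replicate m (⊤ : α))
        ((s.sort (· ≤ ·) ++ List.replicate m (⊤ : α)).map g) := by
  have hmap : (s.sort (· ≤ ·) ++ List.replicate m (⊤ : α)).map g =
      (s.sort (· ≤ ·)).map g ++ List.replicate m (⊤ : α) := by
    rw [List.map_append, List.map_replicate, hg]
  rw [hmap]
  have himg : s.image g = s.map ⟨g, g.injective⟩ :=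
    (Finset.map_eq_image ⟨g, g.injective⟩ s).symm
  have hperm : ((s.image g).sort (· ≤ ·)).Perm ((s.sort (· ≤ ·)).map g) := by
    rw [← Multiset.coe_eq_coe]
    rw [Finset.sort_eq, himg, Finset.map_val, ← Multiset.map_coe, Finset.sort_eq]; rfl
  have hsorted : ((s.image g).sort (· ≤ ·)).Pairwise (· ≤ ·) :=
    Finset.pairwise_sort _ _
  rcases sorted_lex_perm hperm hsorted with h | h
  · left; rw [h]
  · right; exact lex_append_of_lex hperm.length_eq h _
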